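/- Let L be a finite lattice with a CU-labeling λ : Cov(L) → P. For every x ∈ L, the expression x = ⋁_{j ∈ D} j, where D is the set of join-irreducibles j of L with λ(j_*, j) ∈ λ↓(x), is the canonical join-representation of x. Dually, the expression x = ⋀_{m ∈ U} m, where U is the set of meet-irreducibles m of L with λ(m, m*) ∈ λ↑(x), is the canonical meet-representation of x. -/

import Mathlib

universe u v

/-- A lattice congruence on a lattice `L`: an equivalence relation compatible with
meets and joins. -/
structure LatticeCongruence (L : Type u) [Lattice L] : Type u where
  r : L → L → Prop
  refl : ∀ x, r x x
  symm : ∀ x y, r x y → r y x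
  trans : ∀ x y z, r x y → r y z → r x z
  inf_congr : ∀ x y z, r x y → r (x ⊓ z) (y ⊓ z)
  sup_congr : ∀ x y z, r x y → r (x ⊔ z) (y ⊔ z)

namespace LatticeCongruence

variable {L : Type u} [Lattice L]

theorem ext' {c d : LatticeCongruence L} (h : ∀ x y, c.r x y ↔ d.r x y) : c = d := by
  have hr : c.r = d.r := funext fun x => funext fun y => propext (h x y)
  cases c; cases d
  subst hr
  rfl

/-- Congruences are ordered by refinement. -/
instance : PartialOrder (LatticeCongruence L) where
  le c d := ∀ x y : L, c.r x y → d.r x y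
  le_refl c := fun _ _ h => h
  le_trans a b c hab hbc := fun x y h => hbc x y (hab x y h)
  le_antisymm a b hab hba := ext' fun x y => ⟨hab x y, hba x y⟩

/-- The join of two congruences. -/
def conSup (c d : LatticeCongruence L) : LatticeCongruence L where
  r x y := ∀ e : LatticeCongruence L, c ≤ e → d ≤ e → e.r x y
  refl := fun x e _ _ => e.refl x
  symm := fun x y h e hc hd => e.symm x y (h e hc hd)
  trans := fun x y z h h' e hc hd => e.trans x y z (h e hc hd) (h' e hc hd)
  inf_congr := fun x y z h e hc hd => e.inf_congr x y z (h e hc hd)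
  sup_congr := fun x y z h e hc hd => e.sup_congr x y z (h e hc hd)

/-- The meet of two congruences (their intersection). -/
def conInf (c d : LatticeCongruence L) : LatticeCongruence L where
  r x y := c.r x y ∧ d.r x y
  refl := fun x => ⟨c.refl x, d.refl x⟩
  symm := fun x y h => ⟨c.symm x y h.1, d.symm x y h.2⟩
  trans := fun x y z h h' => ⟨c.trans x y z h.1 h'.1, d.trans x y z h.2 h'.2⟩
  inf_congr := fun x y z h => ⟨c.inf_congr x y z h.1, d.inf_congr x y z h.2⟩
  sup_congr := fun x y z h => ⟨c.sup_congr x y z h.1, d.sup_congr x y z h.2⟩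

/-- The lattice `Con(L)` of congruences of `L`. -/
instance : Lattice (LatticeCongruence L) where
  sup := conSup
  le_sup_left c d := fun x y h e hc _ => hc x y h
  le_sup_right c d := fun x y h e _ hd => hd x y h
  sup_le a b c hac hbc := fun x y h => h c hac hbc
  inf := conInf
  inf_le_left c d := fun _ _ h => h.1
  inf_le_right c d := fun _ _ h => h.2
  le_inf a b c hab hac := fun x y h => ⟨hab x y h, hac x y h⟩

/-- `conGen a b` is the finest lattice congruence identifying `a` and `b`. -/
def conGen (a b : L) : LatticeCongruence L where
  r x y := ∀ e : LatticeCongruence L, e.r a b → e.r x y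
  refl := fun x e _ => e.refl x
  symm := fun x y h e he => e.symm x y (h e he)
  trans := fun x y z h h' e he => e.trans x y z (h e he) (h' e he)
  inf_congr := fun x y z h e he => e.inf_congr x y z (h e he)
  sup_congr := fun x y z h e he => e.sup_congr x y z (h e he)

/-- The setoid underlying a lattice congruence. -/
def setoid (c : LatticeCongruence L) : Setoid L :=
  ⟨c.r, ⟨c.refl, fun h => c.symm _ _ h, fun h h' => c.trans _ _ _ h h'⟩⟩

/-- The quotient of `L` by a lattice congruence. -/
def Quo (c : LatticeCongruence L) : Type u := Quotient c.setoid

/-- The canonical quotient map `L → L/Θ`. -/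
def mkQ (c : LatticeCongruence L) (x : L) : c.Quo := Quotient.mk c.setoid x

variable (c : LatticeCongruence L)

theorem sup_congr₂ {x x' y y' : L} (hx : c.r x x') (hy : c.r y y') :
    c.r (x ⊔ y) (x' ⊔ y') := by
  have h1 : c.r (x ⊔ y) (x' ⊔ y) := c.sup_congr x x' y hx
  have h2 : c.r (y ⊔ x') (y' ⊔ x') := c.sup_congr y y' x' hy
  rw [sup_comm y x', sup_comm y' x'] at h2
  exact c.trans _ _ _ h1 h2

theorem inf_congr₂ {x x' y y' : L} (hx : c.r x x') (hy : c.r y y') :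
    c.r (x ⊓ y) (x' ⊓ y') := by
  have h1 : c.r (x ⊓ y) (x' ⊓ y) := c.inf_congr x x' y hx
  have h2 : c.r (y ⊓ x') (y' ⊓ x') := c.inf_congr y y' x' hy
  rw [inf_comm y x', inf_comm y' x'] at h2
  exact c.trans _ _ _ h1 h2

instance : Max c.Quo :=
  ⟨Quotient.lift₂ (fun x y => c.mkQ (x ⊔ y))
    (fun _ _ _ _ hx hy => Quotient.sound (c.sup_congr₂ hx hy))⟩

instance : Min c.Quo :=
  ⟨Quotient.lift₂ (fun x y => c.mkQ (x ⊓ y))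
    (fun _ _ _ _ hx hy => Quotient.sound (c.inf_congr₂ hx hy))⟩

theorem quo_sup_comm (a b : c.Quo) : a ⊔ b = b ⊔ a :=
  Quotient.inductionOn₂ a b fun x y => congrArg (Quotient.mk c.setoid) (sup_comm x y)

theorem quo_sup_assoc (a b d : c.Quo) : a ⊔ b ⊔ d = a ⊔ (b ⊔ d) :=
  Quotient.inductionOn₃ a b d fun x y z => congrArg (Quotient.mk c.setoid) (sup_assoc x y z)

theorem quo_inf_comm (a b : c.Quo) : a ⊓ b = b ⊓ a :=
  Quotient.inductionOn₂ a b fun x y => congrArg (Quotient.mk c.setoid) (inf_comm x y)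

theorem quo_inf_assoc (a b d : c.Quo) : a ⊓ b ⊓ d = a ⊓ (b ⊓ d) :=
  Quotient.inductionOn₃ a b d fun x y z => congrArg (Quotient.mk c.setoid) (inf_assoc x y z)

theorem quo_sup_inf_self (a b : c.Quo) : a ⊔ a ⊓ b = a :=
  Quotient.inductionOn₂ a b fun x y =>
    congrArg (Quotient.mk c.setoid) (sup_inf_self (a := x) (b := y))

theorem quo_inf_sup_self (a b : c.Quo) : a ⊓ (a ⊔ b) = a :=
  Quotient.inductionOn₂ a b fun x y =>
    congrArg (Quotient.mk c.setoid) (inf_sup_self (a := x) (b := y))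

/-- The quotient lattice `L/Θ`. -/
instance : Lattice c.Quo :=
  Lattice.mk' c.quo_sup_comm c.quo_sup_assoc c.quo_inf_comm c.quo_inf_assoc
    c.quo_sup_inf_self c.quo_inf_sup_self

end LatticeCongruence

open LatticeCongruence in
/-- A finite lattice is congruence-uniform if `j ↦ con(j₊, j)` is a bijection from
join-irreducibles of `L` onto join-irreducibles of `Con(L)`, and dually
`m ↦ con(m, m⁺)` is a bijection from meet-irreducibles of `L` onto
meet-irreducibles of `Con(L)`. -/
def IsCongruenceUniform (L : Type u) [Lattice L] : Prop :=
  (∀ j : L, SupIrred j → ∀ a : L, a ⋖ j → SupIrred (conGen a j)) ∧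
  (∀ j j' a a' : L, SupIrred j → SupIrred j' → a ⋖ j → a' ⋖ j' →
      conGen a j = conGen a' j' → j = j') ∧
  (∀ Θ : LatticeCongruence L, SupIrred Θ → ∃ j a : L, SupIrred j ∧ a ⋖ j ∧ conGen a j = Θ) ∧
  (∀ m : L, InfIrred m → ∀ b : L, m ⋖ b → InfIrred (conGen m b)) ∧
  (∀ m m' b b' : L, InfIrred m → InfIrred m' → m ⋖ b → m' ⋖ b' →
      conGen m b = conGen m' b' → m = m') ∧
  (∀ Θ : LatticeCongruence L, InfIrred Θ → ∃ m b : L, InfIrred m ∧ m ⋖ b ∧ conGen m b = Θ)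

/-- `C` is a maximal chain of the closed interval `[a, b]`. -/
def IsMaxChainIn {L : Type u} [Lattice L] (a b : L) (C : Set L) : Prop :=
  C ⊆ Set.Icc a b ∧ IsChain (· ≤ ·) C ∧
    ∀ D : Set L, D ⊆ Set.Icc a b → IsChain (· ≤ ·) D → C ⊆ D → C = D

/-- `u` and `v` are consecutive elements of the chain `C` (the covering pairs of `C`
viewed as a poset in its own right). -/
def ConsecIn {L : Type u} [Lattice L] (C : Set L) (u v : L) : Prop :=
  u ∈ C ∧ v ∈ C ∧ u < v ∧ ∀ w ∈ C, ¬(u < w ∧ w < v)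

/-- `lam` is a CN-labeling of the lattice `L` (with values in the poset `P`):
the defining conditions (CN1), (CN2), (CN3) hold in `L` and in its order-dual. -/
def IsCNLabeling {L : Type u} [Lattice L] {P : Type v} [PartialOrder P]
    (lam : L → L → P) : Prop :=
  (∀ x y z : L, x ≠ y → z ⋖ x → z ⋖ y →
    ∀ C₁ C₂ : Set L, IsMaxChainIn z (x ⊔ y) C₁ → IsMaxChainIn z (x ⊔ y) C₂ →
      x ∈ C₁ → y ∈ C₂ →
      (∀ x' ∈ C₁, x' ⋖ (x ⊔ y) → lam x' (x ⊔ y) = lam z y) ∧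
      (∀ y' ∈ C₂, y' ⋖ (x ⊔ y) → lam y' (x ⊔ y) = lam z x) ∧
      (∀ u v : L, ConsecIn C₁ u v → z < u → v < x ⊔ y →
        lam z x < lam u v ∧ lam z y < lam u v) ∧
      (∀ u v u' v' : L, ConsecIn C₁ u v → ConsecIn C₁ u' v' →
        lam u v = lam u' v' → u = u' ∧ v = v')) ∧
  (∀ x y z : L, x ≠ y → x ⋖ z → y ⋖ z →
    ∀ C₁ C₂ : Set L, IsMaxChainIn (x ⊓ y) z C₁ → IsMaxChainIn (x ⊓ y) z C₂ →
      x ∈ C₁ → y ∈ C₂ →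
      (∀ x' ∈ C₁, (x ⊓ y) ⋖ x' → lam (x ⊓ y) x' = lam y z) ∧
      (∀ y' ∈ C₂, (x ⊓ y) ⋖ y' → lam (x ⊓ y) y' = lam x z) ∧
      (∀ u v : L, ConsecIn C₁ u v → x ⊓ y < u → v < z →
        lam x z < lam u v ∧ lam y z < lam u v) ∧
      (∀ u v u' v' : L, ConsecIn C₁ u v → ConsecIn C₁ u' v' →
        lam u v = lam u' v' → u = u' ∧ v = v'))

/-- `lam` is a CU-labeling of the lattice `L`: a CN-labeling satisfying (CU1), (CU2). -/
def IsCULabeling {L : Type u} [Lattice L] {P : Type v} [PartialOrder P]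
    (lam : L → L → P) : Prop :=
  IsCNLabeling lam ∧
  (∀ j j' a a' : L, SupIrred j → SupIrred j' → a ⋖ j → a' ⋖ j' → j ≠ j' →
    lam a j ≠ lam a' j') ∧
  (∀ m m' b b' : L, InfIrred m → InfIrred m' → m ⋖ b → m' ⋖ b' → m ≠ m' →
    lam m b ≠ lam m' b')

/-- `λ↓(x)`: the set of labels of covering pairs below `x`. -/
def lamDown {L : Type u} [Lattice L] {P : Type v} (lam : L → L → P) (x : L) : Set P :=
  {p | ∃ y, y ⋖ x ∧ lam y x = p}

/-- `λ↑(x)`: the set of labels of covering pairs above `x`. -/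
def lamUp {L : Type u} [Lattice L] {P : Type v} (lam : L → L → P) (x : L) : Set P :=
  {p | ∃ y, x ⋖ y ∧ lam x y = p}

/-- Covering pairs `(x, y)` and `(w, z)` are associates. -/
def AreAssociates {L : Type u} [Lattice L] (x y w z : L) : Prop :=
  (y ⊓ w = x ∧ y ⊔ w = z) ∨ (x ⊓ z = w ∧ x ⊔ z = y)

/-- `x = ⋁ A` is the canonical join-representation of `x`. -/
def IsCanonicalJoinRep {L : Type u} [Lattice L] (A : Set L) (x : L) : Prop :=
  (∀ a ∈ A, SupIrred a) ∧ IsLUB A x ∧ (∀ B ⊂ A, ¬IsLUB B x) ∧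
    ∀ B : Set L, (∀ b ∈ B, SupIrred b) → IsLUB B x → (∀ B' ⊂ B, ¬IsLUB B' x) →
      ∀ a ∈ A, ∃ b ∈ B, a ≤ b

/-- `x = ⋀ A` is the canonical meet-representation of `x`. -/
def IsCanonicalMeetRep {L : Type u} [Lattice L] (A : Set L) (x : L) : Prop :=
  (∀ a ∈ A, InfIrred a) ∧ IsGLB A x ∧ (∀ B ⊂ A, ¬IsGLB B x) ∧
    ∀ B : Set L, (∀ b ∈ B, InfIrred b) → IsGLB B x → (∀ B' ⊂ B, ¬IsGLB B' x) →
      ∀ a ∈ A, ∃ b ∈ B, b ≤ a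

section CUProofAux

private theorem Set.Finite.exists_maximal_wrt {α β : Type*} [PartialOrder β] (f : α → β)
    (s : Set α) (h : s.Finite) (hs : s.Nonempty) :
    ∃ a ∈ s, ∀ a' ∈ s, f a ≤ f a' → f a = f a' := by
  obtain ⟨a, ha, hmax⟩ := h.exists_maximalFor f s hs
  exact ⟨a, ha, fun a' ha' hle => le_antisymm hle (hmax ha' hle)⟩

private theorem Set.Finite.exists_minimal_wrt {α β : Type*} [PartialOrder β] (f : α → β)
    (s : Set α) (h : s.Finite) (hs : s.Nonempty) :
    ∃ a ∈ s, ∀ a' ∈ s, f a' ≤ f a → f a = f a' := by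
  obtain ⟨a, ha, hmin⟩ := h.exists_minimalFor f s hs
  exact ⟨a, ha, fun a' ha' hle => le_antisymm (hmin ha' hle) hle⟩

variable {L : Type u} [Lattice L] [Fintype L]

private lemma covby_sandwich {a b c : L} (h : a ⋖ b) (h1 : a ≤ c) (h2 : c < b) : c = a := by
  by_contra hne
  exact h.2 (lt_of_le_of_ne h1 (Ne.symm hne)) h2

private lemma covby_sandwich' {a b c : L} (h : a ⋖ b) (h1 : c ≤ b) (h2 : a < c) : c = b := by
  by_contra hne
  exact h.2 h2 (lt_of_le_of_ne h1 hne)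

private lemma exists_covby_le {a b : L} (h : a < b) : ∃ c, a ⋖ c ∧ c ≤ b := by
  obtain ⟨c, ⟨hac, hcb⟩, hmin⟩ :=
    Set.Finite.exists_minimal_wrt id {c : L | a < c ∧ c ≤ b} (Set.toFinite _) ⟨b, h, le_rfl⟩
  refine ⟨c, ⟨hac, fun d had hdc => ?_⟩, hcb⟩
  exact hdc.ne' (hmin d ⟨had, hdc.le.trans hcb⟩ hdc.le)

private lemma exists_le_covby {a b : L} (h : a < b) : ∃ c, a ≤ c ∧ c ⋖ b := by
  obtain ⟨c, ⟨hac, hcb⟩, hmax⟩ :=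
    Set.Finite.exists_maximal_wrt id {c : L | a ≤ c ∧ c < b} (Set.toFinite _) ⟨a, le_rfl, h⟩
  refine ⟨c, hac, hcb, fun d hcd hdb => ?_⟩
  exact hcd.ne (hmax d ⟨hac.trans hcd.le, hdb⟩ hcd.le)

private lemma exists_second_covby {z t : L} (h : ¬ SupIrred t) (hz : z ⋖ t) :
    ∃ v, v ⋖ t ∧ v ≠ z := by
  rw [SupIrred, not_and_or] at h
  rcases h with h | h
  · exact absurd hz.lt (not_not.mp h).not_lt
  · push_neg at h
    obtain ⟨b, c, hbc, hb, hc⟩ := h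
    have hbt : b < t := lt_of_le_of_ne (hbc ▸ le_sup_left) hb
    have hct : c < t := lt_of_le_of_ne (hbc ▸ le_sup_right) hc
    by_cases hbz : b ≤ z
    · have hcz : ¬ c ≤ z := fun hcz =>
        hz.lt.ne (le_antisymm hz.lt.le (hbc.symm.trans_le (sup_le hbz hcz)))
      obtain ⟨v, hcv, hvt⟩ := exists_le_covby hct
      exact ⟨v, hvt, fun hvz => hcz (hcv.trans hvz.le)⟩
    · obtain ⟨v, hbv, hvt⟩ := exists_le_covby hbt
      exact ⟨v, hvt, fun hvz => hbz (hbv.trans hvz.le)⟩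

private lemma exists_second_covby' {z t : L} (h : ¬ InfIrred t) (hz : t ⋖ z) :
    ∃ v, t ⋖ v ∧ v ≠ z := by
  rw [InfIrred, not_and_or] at h
  rcases h with h | h
  · exact absurd hz.lt (not_not.mp h).not_lt
  · push_neg at h
    obtain ⟨b, c, hbc, hb, hc⟩ := h
    have hbt : t < b := lt_of_le_of_ne (hbc ▸ inf_le_left) (Ne.symm hb)
    have hct : t < c := lt_of_le_of_ne (hbc ▸ inf_le_right) (Ne.symm hc)
    by_cases hbz : z ≤ b
    · have hcz : ¬ z ≤ c := fun hcz =>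
        hz.lt.ne (le_antisymm hz.lt.le ((le_inf hbz hcz).trans hbc.le))
      obtain ⟨v, hvt, hcv⟩ := exists_covby_le hct
      exact ⟨v, hvt, fun hvz => hcz (hvz ▸ hcv)⟩
    · obtain ⟨v, hvt, hbv⟩ := exists_covby_le hbt
      exact ⟨v, hvt, fun hvz => hbz (hvz ▸ hbv)⟩

private lemma isChain_of_list (l : List L) (hl : l.Pairwise (· ≤ ·)) :
    IsChain (· ≤ ·) {x | x ∈ l} := by
  intro p hp q hq hne
  have h2 : l.Pairwise (fun a b : L => a ≤ b ∨ b ≤ a) := hl.imp fun h => Or.inl h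
  haveI : Std.Symm (fun a b : L => a ≤ b ∨ b ≤ a) := ⟨fun _ _ h => Or.symm h⟩
  exact List.Pairwise.forall h2 hp hq hne

private lemma exists_maxChainIn {a b : L} {C₀ : Set L} (h0 : C₀ ⊆ Set.Icc a b)
    (hc : IsChain (· ≤ ·) C₀) : ∃ C, IsMaxChainIn a b C ∧ C₀ ⊆ C := by
  obtain ⟨C, ⟨hsub, hicc, hchain⟩, hmax⟩ :=
    Set.Finite.exists_maximal_wrt id {D : Set L | C₀ ⊆ D ∧ D ⊆ Set.Icc a b ∧ IsChain (· ≤ ·) D}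
      (Set.toFinite _) ⟨C₀, subset_rfl, h0, hc⟩
  refine ⟨C, ⟨hicc, hchain, fun D hD1 hD2 hCD => ?_⟩, hsub⟩
  exact hmax D ⟨hsub.trans hCD, hD1, hD2⟩ hCD

private lemma IsMaxChainIn.mem_bot {a b : L} {C : Set L} (h : IsMaxChainIn a b C)
    (hab : a ≤ b) : a ∈ C := by
  have heq := h.2.2 (insert a C) ?_ ?_ (Set.subset_insert a C)
  · rw [heq]; exact Set.mem_insert a C
  · rw [Set.insert_subset_iff]; exact ⟨⟨le_rfl, hab⟩, h.1⟩
  · exact h.2.1.insert fun c hc _ => Or.inl (h.1 hc).1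

private lemma IsMaxChainIn.mem_top {a b : L} {C : Set L} (h : IsMaxChainIn a b C)
    (hab : a ≤ b) : b ∈ C := by
  have heq := h.2.2 (insert b C) ?_ ?_ (Set.subset_insert b C)
  · rw [heq]; exact Set.mem_insert b C
  · rw [Set.insert_subset_iff]; exact ⟨⟨hab, le_rfl⟩, h.1⟩
  · exact h.2.1.insert fun c hc _ => Or.inr (h.1 hc).2

private lemma IsMaxChainIn.exists_covby_top {a b : L} {C : Set L} (h : IsMaxChainIn a b C)
    (hab : a < b) : ∃ r ∈ C, r ⋖ b := by
  have hbC : b ∈ C := h.mem_top hab.le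
  have haC : a ∈ C := h.mem_bot hab.le
  have hne : (C \ {b}).Nonempty := ⟨a, haC, by simp [hab.ne]⟩
  obtain ⟨r, hrmem, hmax⟩ := Set.Finite.exists_maximal_wrt id (C \ {b}) (Set.toFinite _) hne
  obtain ⟨hrC, hrb⟩ := hrmem
  have hrb' : r ≠ b := by simpa using hrb
  have hrmax : ∀ s ∈ C, s ≠ b → s ≤ r := by
    intro s hs hsb
    rcases eq_or_ne s r with rfl | hsr
    · exact le_rfl
    · rcases h.2.1 hs hrC hsr with h' | h'
      · exact h'
      · exact (hmax s ⟨hs, by simpa using hsb⟩ h').ge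
  have hrblt : r < b := lt_of_le_of_ne (h.1 hrC).2 hrb'
  refine ⟨r, hrC, hrblt, fun s hrs hsb => ?_⟩
  have hsC : s ∈ C := by
    have heq := h.2.2 (insert s C) ?_ ?_ (Set.subset_insert s C)
    · rw [heq]; exact Set.mem_insert s C
    · rw [Set.insert_subset_iff]
      exact ⟨⟨(h.1 hrC).1.trans hrs.le, hsb.le⟩, h.1⟩
    · refine h.2.1.insert fun c hc _ => ?_
      rcases eq_or_ne c b with rfl | hcb
      · exact Or.inl hsb.le
      · exact Or.inr ((hrmax c hc hcb).trans hrs.le)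
  exact hrs.ne (hmax s ⟨hsC, by simpa using hsb.ne⟩ hrs.le)

private lemma IsMaxChainIn.exists_covby_bot {a b : L} {C : Set L} (h : IsMaxChainIn a b C)
    (hab : a < b) : ∃ r ∈ C, a ⋖ r := by
  have hbC : b ∈ C := h.mem_top hab.le
  have haC : a ∈ C := h.mem_bot hab.le
  have hne : (C \ {a}).Nonempty := ⟨b, hbC, by simp [hab.ne']⟩
  obtain ⟨r, hrmem, hmin⟩ := Set.Finite.exists_minimal_wrt id (C \ {a}) (Set.toFinite _) hne
  obtain ⟨hrC, hra⟩ := hrmem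
  have hra' : r ≠ a := by simpa using hra
  have hrmin : ∀ s ∈ C, s ≠ a → r ≤ s := by
    intro s hs hsa
    rcases eq_or_ne s r with rfl | hsr
    · exact le_rfl
    · rcases h.2.1 hs hrC hsr with h' | h'
      · exact (hmin s ⟨hs, by simpa using hsa⟩ h').le
      · exact h'
  have hralt : a < r := lt_of_le_of_ne (h.1 hrC).1 (Ne.symm hra')
  refine ⟨r, hrC, hralt, fun s has hsr => ?_⟩
  have hsC : s ∈ C := by
    have heq := h.2.2 (insert s C) ?_ ?_ (Set.subset_insert s C)
    · rw [heq]; exact Set.mem_insert s C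
    · rw [Set.insert_subset_iff]
      exact ⟨⟨has.le, hsr.le.trans (h.1 hrC).2⟩, h.1⟩
    · refine h.2.1.insert fun c hc _ => ?_
      rcases eq_or_ne c a with rfl | hca
      · exact Or.inr has.le
      · exact Or.inl (hsr.le.trans (hrmin c hc hca))
  exact hsr.ne' (hmin s ⟨hsC, by simpa using has.ne'⟩ hsr.le)

private lemma consecIn_of_covby {C : Set L} {u v : L} (hu : u ∈ C) (hv : v ∈ C) (h : u ⋖ v) :
    ConsecIn C u v :=
  ⟨hu, hv, h.lt, fun w _ hw => h.2 hw.1 hw.2⟩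

end CUProofAux
section CUProofCN

variable {L : Type u} [Lattice L] [Fintype L] {P : Type v} [PartialOrder P] {lam : L → L → P}

private lemma lemD_dn (hCN : IsCNLabeling lam) {z v t w : L} (hz : z ⋖ t) (hv : v ⋖ t)
    (hne : z ≠ v) (hw : (z ⊓ v) ⋖ w) (hwv : w ≤ v) : lam (z ⊓ v) w = lam z t := by
  have hmw : z ⊓ v ≤ w := hw.lt.le
  have hvt : v ≤ t := hv.lt.le
  have hzt : z ≤ t := hz.lt.le
  have hmz : z ⊓ v ≤ z := inf_le_left
  have hmt : z ⊓ v ≤ t := hmz.trans hzt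
  obtain ⟨C₁, hC₁, hsub₁⟩ := exists_maxChainIn (a := z ⊓ v) (b := t)
    (C₀ := {x | x ∈ [z ⊓ v, w, v, t]})
    (by
      intro p hp
      simp only [Set.mem_setOf_eq, List.mem_cons, List.not_mem_nil, or_false] at hp
      rcases hp with rfl | rfl | rfl | rfl
      · exact ⟨le_rfl, hmt⟩
      · exact ⟨hmw, hwv.trans hvt⟩
      · exact ⟨inf_le_right, hvt⟩
      · exact ⟨hmt, le_rfl⟩)
    (isChain_of_list _ (List.isChain_iff_pairwise.mp (by
      simp only [List.isChain_cons_cons, List.isChain_singleton, and_true]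
      exact ⟨hmw, hwv, hvt⟩)))
  obtain ⟨C₂, hC₂, hsub₂⟩ := exists_maxChainIn (a := z ⊓ v) (b := t)
    (C₀ := {x | x ∈ [z ⊓ v, z, t]})
    (by
      intro p hp
      simp only [Set.mem_setOf_eq, List.mem_cons, List.not_mem_nil, or_false] at hp
      rcases hp with rfl | rfl | rfl
      · exact ⟨le_rfl, hmt⟩
      · exact ⟨hmz, hzt⟩
      · exact ⟨hmt, le_rfl⟩)
    (isChain_of_list _ (List.isChain_iff_pairwise.mp (by
      simp only [List.isChain_cons_cons, List.isChain_singleton, and_true]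
      exact ⟨hmz, hzt⟩)))
  have hconj := (hCN.2 v z t (Ne.symm hne) hv hz C₁ C₂
    (by rwa [inf_comm v z]) (by rwa [inf_comm v z])
    (hsub₁ (by simp)) (hsub₂ (by simp)))
  have := hconj.1 w (hsub₁ (by simp)) (by rwa [inf_comm v z])
  rwa [inf_comm v z] at this

private lemma lemD_up (hCN : IsCNLabeling lam) {z w w' v : L} (hw : z ⋖ w) (hw' : z ⋖ w')
    (hne : w ≠ w') (hv : v ⋖ (w ⊔ w')) (hv' : w' ≤ v) : lam v (w ⊔ w') = lam z w := by
  have hzw : z ≤ w := hw.lt.le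
  have hzw' : z ≤ w' := hw'.lt.le
  have hvT : v ≤ w ⊔ w' := hv.lt.le
  have hzT : z ≤ w ⊔ w' := hzw.trans le_sup_left
  obtain ⟨C₁, hC₁, hsub₁⟩ := exists_maxChainIn (a := z) (b := w ⊔ w')
    (C₀ := {x | x ∈ [z, w, w ⊔ w']})
    (by
      intro p hp
      simp only [Set.mem_setOf_eq, List.mem_cons, List.not_mem_nil, or_false] at hp
      rcases hp with rfl | rfl | rfl
      · exact ⟨le_rfl, hzT⟩
      · exact ⟨hzw, le_sup_left⟩
      · exact ⟨hzT, le_rfl⟩)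
    (isChain_of_list _ (List.isChain_iff_pairwise.mp (by
      simp only [List.isChain_cons_cons, List.isChain_singleton, and_true]
      exact ⟨hzw, le_sup_left⟩)))
  obtain ⟨C₂, hC₂, hsub₂⟩ := exists_maxChainIn (a := z) (b := w ⊔ w')
    (C₀ := {x | x ∈ [z, w', v, w ⊔ w']})
    (by
      intro p hp
      simp only [Set.mem_setOf_eq, List.mem_cons, List.not_mem_nil, or_false] at hp
      rcases hp with rfl | rfl | rfl | rfl
      · exact ⟨le_rfl, hzT⟩
      · exact ⟨hzw', le_sup_right⟩
      · exact ⟨hzw'.trans hv', hvT⟩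
      · exact ⟨hzT, le_rfl⟩)
    (isChain_of_list _ (List.isChain_iff_pairwise.mp (by
      simp only [List.isChain_cons_cons, List.isChain_singleton, and_true]
      exact ⟨hzw', hv', hvT⟩)))
  have hconj := (hCN.1 w w' z hne hw hw' C₁ C₂ hC₁ hC₂ (hsub₁ (by simp)) (hsub₂ (by simp)))
  exact hconj.2.1 v (hsub₂ (by simp)) hv

private lemma dist_up (hCN : IsCNLabeling lam) {z w w' : L} (hw : z ⋖ w) (hw' : z ⋖ w')
    (hne : w ≠ w') : lam z w ≠ lam z w' := by
  intro heq
  have hzw : z ≤ w := hw.lt.le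
  have hzw' : z ≤ w' := hw'.lt.le
  have hzT : z < w ⊔ w' := hw.lt.trans_le le_sup_left
  obtain ⟨C₁, hC₁, hsub₁⟩ := exists_maxChainIn (a := z) (b := w ⊔ w')
    (C₀ := {x | x ∈ [z, w, w ⊔ w']})
    (by
      intro p hp
      simp only [Set.mem_setOf_eq, List.mem_cons, List.not_mem_nil, or_false] at hp
      rcases hp with rfl | rfl | rfl
      · exact ⟨le_rfl, hzT.le⟩
      · exact ⟨hzw, le_sup_left⟩
      · exact ⟨hzT.le, le_rfl⟩)
    (isChain_of_list _ (List.isChain_iff_pairwise.mp (by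
      simp only [List.isChain_cons_cons, List.isChain_singleton, and_true]
      exact ⟨hzw, le_sup_left⟩)))
  obtain ⟨C₂, hC₂, hsub₂⟩ := exists_maxChainIn (a := z) (b := w ⊔ w')
    (C₀ := {x | x ∈ [z, w', w ⊔ w']})
    (by
      intro p hp
      simp only [Set.mem_setOf_eq, List.mem_cons, List.not_mem_nil, or_false] at hp
      rcases hp with rfl | rfl | rfl
      · exact ⟨le_rfl, hzT.le⟩
      · exact ⟨hzw', le_sup_right⟩
      · exact ⟨hzT.le, le_rfl⟩)
    (isChain_of_list _ (List.isChain_iff_pairwise.mp (by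
      simp only [List.isChain_cons_cons, List.isChain_singleton, and_true]
      exact ⟨hzw', le_sup_right⟩)))
  have hconj := (hCN.1 w w' z hne hw hw' C₁ C₂ hC₁ hC₂ (hsub₁ (by simp)) (hsub₂ (by simp)))
  obtain ⟨r, hrC, hrT⟩ := hC₁.exists_covby_top hzT
  have h1 : lam r (w ⊔ w') = lam z w' := hconj.1 r hrC hrT
  have h2 := hconj.2.2.2 z w r (w ⊔ w')
    (consecIn_of_covby (hsub₁ (by simp)) (hsub₁ (by simp)) hw)
    (consecIn_of_covby hrC (hsub₁ (by simp)) hrT)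
    (by rw [heq, ← h1])
  have hle : w' ≤ w := h2.2 ▸ le_sup_right
  rcases lt_or_eq_of_le hle with h' | h'
  · exact hw.2 hw'.lt h'
  · exact hne h'.symm

private lemma dist_dn (hCN : IsCNLabeling lam) {y y' x : L} (hy : y ⋖ x) (hy' : y' ⋖ x)
    (hne : y ≠ y') : lam y x ≠ lam y' x := by
  intro heq
  have hyx : y ≤ x := hy.lt.le
  have hy'x : y' ≤ x := hy'.lt.le
  have hmx : y ⊓ y' < x := inf_le_left.trans_lt hy.lt
  obtain ⟨C₁, hC₁, hsub₁⟩ := exists_maxChainIn (a := y ⊓ y') (b := x)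
    (C₀ := {x' | x' ∈ [y ⊓ y', y, x]})
    (by
      intro p hp
      simp only [Set.mem_setOf_eq, List.mem_cons, List.not_mem_nil, or_false] at hp
      rcases hp with rfl | rfl | rfl
      · exact ⟨le_rfl, hmx.le⟩
      · exact ⟨inf_le_left, hyx⟩
      · exact ⟨hmx.le, le_rfl⟩)
    (isChain_of_list _ (List.isChain_iff_pairwise.mp (by
      simp only [List.isChain_cons_cons, List.isChain_singleton, and_true]
      exact ⟨inf_le_left, hyx⟩)))
  obtain ⟨C₂, hC₂, hsub₂⟩ := exists_maxChainIn (a := y ⊓ y') (b := x)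
    (C₀ := {x' | x' ∈ [y ⊓ y', y', x]})
    (by
      intro p hp
      simp only [Set.mem_setOf_eq, List.mem_cons, List.not_mem_nil, or_false] at hp
      rcases hp with rfl | rfl | rfl
      · exact ⟨le_rfl, hmx.le⟩
      · exact ⟨inf_le_right, hy'x⟩
      · exact ⟨hmx.le, le_rfl⟩)
    (isChain_of_list _ (List.isChain_iff_pairwise.mp (by
      simp only [List.isChain_cons_cons, List.isChain_singleton, and_true]
      exact ⟨inf_le_right, hy'x⟩)))
  have hconj := (hCN.2 y y' x hne hy hy' C₁ C₂ hC₁ hC₂ (hsub₁ (by simp)) (hsub₂ (by simp)))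
  obtain ⟨r, hrC, hrT⟩ := hC₁.exists_covby_bot hmx
  have h1 : lam (y ⊓ y') r = lam y' x := hconj.1 r hrC hrT
  have h2 := hconj.2.2.2 (y ⊓ y') r y x
    (consecIn_of_covby (hsub₁ (by simp)) hrC hrT)
    (consecIn_of_covby (hsub₁ (by simp)) (hsub₁ (by simp)) hy)
    (h1.trans heq.symm)
  have hle : y ≤ y' := (h2.1.symm.le).trans inf_le_right
  rcases lt_or_eq_of_le hle with h' | h'
  · exact hy.2 h' hy'.lt
  · exact hne h'

private lemma conj3_dn (hCN : IsCNLabeling lam) {z v t w₂ y₆ x₂ : L} (hz : z ⋖ t) (hv : v ⋖ t)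
    (hne : z ≠ v) (h1 : (z ⊓ v) ⋖ w₂) (h2 : w₂ ≤ y₆) (h3 : y₆ ⋖ x₂) (h4 : x₂ ≤ v) :
    lam z t < lam y₆ x₂ := by
  have hvt : v ≤ t := hv.lt.le
  have hzt : z ≤ t := hz.lt.le
  have hmw : z ⊓ v ≤ w₂ := h1.lt.le
  have hy₆x : y₆ ≤ x₂ := h3.lt.le
  obtain ⟨C₁, hC₁, hsub₁⟩ := exists_maxChainIn (a := z ⊓ v) (b := t)
    (C₀ := {x' | x' ∈ [z ⊓ v, w₂, y₆, x₂, v, t]})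
    (by
      intro p hp
      simp only [Set.mem_setOf_eq, List.mem_cons, List.not_mem_nil, or_false] at hp
      rcases hp with rfl | rfl | rfl | rfl | rfl | rfl
      · exact ⟨le_rfl, inf_le_left.trans hzt⟩
      · exact ⟨hmw, ((h2.trans hy₆x).trans h4).trans hvt⟩
      · exact ⟨hmw.trans h2, (hy₆x.trans h4).trans hvt⟩
      · exact ⟨hmw.trans (h2.trans hy₆x), h4.trans hvt⟩
      · exact ⟨inf_le_right, hvt⟩
      · exact ⟨inf_le_left.trans hzt, le_rfl⟩)
    (isChain_of_list _ (List.isChain_iff_pairwise.mp (by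
      simp only [List.isChain_cons_cons, List.isChain_singleton, and_true]
      exact ⟨hmw, h2, hy₆x, h4, hvt⟩)))
  obtain ⟨C₂, hC₂, hsub₂⟩ := exists_maxChainIn (a := z ⊓ v) (b := t)
    (C₀ := {x' | x' ∈ [z ⊓ v, z, t]})
    (by
      intro p hp
      simp only [Set.mem_setOf_eq, List.mem_cons, List.not_mem_nil, or_false] at hp
      rcases hp with rfl | rfl | rfl
      · exact ⟨le_rfl, inf_le_left.trans hzt⟩
      · exact ⟨inf_le_left, hzt⟩
      · exact ⟨inf_le_left.trans hzt, le_rfl⟩)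
    (isChain_of_list _ (List.isChain_iff_pairwise.mp (by
      simp only [List.isChain_cons_cons, List.isChain_singleton, and_true]
      exact ⟨inf_le_left, hzt⟩)))
  have hconj := (hCN.2 v z t (Ne.symm hne) hv hz C₁ C₂
    (by rwa [inf_comm v z]) (by rwa [inf_comm v z])
    (hsub₁ (by simp)) (hsub₂ (by simp)))
  have := hconj.2.2.1 y₆ x₂
    (consecIn_of_covby (hsub₁ (by simp)) (hsub₁ (by simp)) h3)
    (by rw [inf_comm v z]; exact h1.lt.trans_le h2)
    (lt_of_le_of_lt h4 hv.lt)
  exact this.2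

private lemma conj3_up (hCN : IsCNLabeling lam) {t' u s w₂ x₆ y₂ : L} (hu : t' ⋖ u)
    (hs : t' ⋖ s) (hne : u ≠ s) (h1 : w₂ ⋖ (u ⊔ s)) (h2 : x₆ ≤ w₂) (h3 : y₂ ⋖ x₆)
    (h4 : s ≤ y₂) : lam t' u < lam y₂ x₆ := by
  have htu : t' ≤ u := hu.lt.le
  have hts : t' ≤ s := hs.lt.le
  have hwT : w₂ ≤ u ⊔ s := h1.lt.le
  have hyx : y₂ ≤ x₆ := h3.lt.le
  obtain ⟨C₁, hC₁, hsub₁⟩ := exists_maxChainIn (a := t') (b := u ⊔ s)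
    (C₀ := {x' | x' ∈ [t', s, y₂, x₆, w₂, u ⊔ s]})
    (by
      intro p hp
      simp only [Set.mem_setOf_eq, List.mem_cons, List.not_mem_nil, or_false] at hp
      rcases hp with rfl | rfl | rfl | rfl | rfl | rfl
      · exact ⟨le_rfl, htu.trans le_sup_left⟩
      · exact ⟨hts, le_sup_right⟩
      · exact ⟨hts.trans h4, (hyx.trans h2).trans hwT⟩
      · exact ⟨hts.trans (h4.trans hyx), h2.trans hwT⟩
      · exact ⟨hts.trans (h4.trans (hyx.trans h2)), hwT⟩
      · exact ⟨htu.trans le_sup_left, le_rfl⟩)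
    (isChain_of_list _ (List.isChain_iff_pairwise.mp (by
      simp only [List.isChain_cons_cons, List.isChain_singleton, and_true]
      exact ⟨hts, h4, hyx, h2, hwT⟩)))
  obtain ⟨C₂, hC₂, hsub₂⟩ := exists_maxChainIn (a := t') (b := u ⊔ s)
    (C₀ := {x' | x' ∈ [t', u, u ⊔ s]})
    (by
      intro p hp
      simp only [Set.mem_setOf_eq, List.mem_cons, List.not_mem_nil, or_false] at hp
      rcases hp with rfl | rfl | rfl
      · exact ⟨le_rfl, htu.trans le_sup_left⟩
      · exact ⟨htu, le_sup_left⟩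
      · exact ⟨htu.trans le_sup_left, le_rfl⟩)
    (isChain_of_list _ (List.isChain_iff_pairwise.mp (by
      simp only [List.isChain_cons_cons, List.isChain_singleton, and_true]
      exact ⟨htu, le_sup_left⟩)))
  have hconj := (hCN.1 s u t' (Ne.symm hne) hs hu C₁ C₂
    (by rwa [sup_comm s u]) (by rwa [sup_comm s u])
    (hsub₁ (by simp)) (hsub₂ (by simp)))
  have := hconj.2.2.1 y₂ x₆
    (consecIn_of_covby (hsub₁ (by simp)) (hsub₁ (by simp)) h3)
    (lt_of_lt_of_le hs.lt h4)
    (by rw [sup_comm s u]; exact lt_of_le_of_lt h2 h1.lt)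
  exact this.2

private lemma uniq_cover_dn (hCN : IsCNLabeling lam) {z v t : L} (hz : z ⋖ t) (hv : v ⋖ t)
    (hne : z ≠ v) :
    ∃ w, ((z ⊓ v) ⋖ w ∧ w ≤ v) ∧ ∀ w', (z ⊓ v) ⋖ w' → w' ≤ v → w' = w := by
  have hmv : z ⊓ v < v := by
    rcases lt_or_eq_of_le (inf_le_right : z ⊓ v ≤ v) with h | h
    · exact h
    · exfalso
      have hvz : v ≤ z := h.symm.le.trans inf_le_left
      rcases lt_or_eq_of_le hvz with h' | h'
      · exact hv.2 h' hz.lt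
      · exact hne h'.symm
  obtain ⟨w, hw, hwv⟩ := exists_covby_le hmv
  refine ⟨w, ⟨hw, hwv⟩, fun w' hw' hwv' => ?_⟩
  by_contra hne'
  exact dist_up hCN hw' hw hne'
    (by rw [lemD_dn hCN hz hv hne hw' hwv', lemD_dn hCN hz hv hne hw hwv])

private lemma uniq_cover_up (hCN : IsCNLabeling lam) {t' u s : L} (hu : t' ⋖ u) (hs : t' ⋖ s)
    (hne : u ≠ s) :
    ∃ w, (w ⋖ (u ⊔ s) ∧ s ≤ w) ∧ ∀ w', w' ⋖ (u ⊔ s) → s ≤ w' → w' = w := by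
  have hsv : s < u ⊔ s := by
    rcases lt_or_eq_of_le (le_sup_right : s ≤ u ⊔ s) with h | h
    · exact h
    · exfalso
      have hus : u ≤ s := le_sup_left.trans h.symm.le
      rcases lt_or_eq_of_le hus with h' | h'
      · exact hs.2 hu.lt h'
      · exact hne h'
  obtain ⟨w, hsw, hw⟩ := exists_le_covby hsv
  refine ⟨w, ⟨hw, hsw⟩, fun w' hw' hsw' => ?_⟩
  by_contra hne'
  exact dist_dn hCN hw' hw hne'
    (by rw [lemD_up hCN hu hs hne hw' hsw', lemD_up hCN hu hs hne hw hsw])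

end CUProofCN
section CUProofPing

variable {L : Type u} [Lattice L] [Fintype L] {P : Type v} [PartialOrder P] {lam : L → L → P}

private lemma exists_supIrred_persp (hCN : IsCNLabeling lam) :
    ∀ t z : L, z ⋖ t →
      ∃ j jl : L, SupIrred j ∧ jl ⋖ j ∧ lam jl j = lam z t ∧ j ⊓ z = jl ∧ j ⊔ z = t := by
  intro t
  refine WellFoundedLT.induction
    (motive := fun t => ∀ z : L, z ⋖ t →
      ∃ j jl : L, SupIrred j ∧ jl ⋖ j ∧ lam jl j = lam z t ∧ j ⊓ z = jl ∧ j ⊔ z = t) t ?_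
  intro t IH z hz
  by_cases hirr : SupIrred t
  · exact ⟨t, z, hirr, hz, rfl, inf_eq_right.mpr hz.lt.le, sup_eq_left.mpr hz.lt.le⟩
  · obtain ⟨v, hv, hvz⟩ := exists_second_covby hirr hz
    obtain ⟨w, ⟨hw, hwv⟩, -⟩ := uniq_cover_dn hCN hz hv (Ne.symm hvz)
    have hwt : w < t := lt_of_le_of_lt hwv hv.lt
    obtain ⟨j, jl, hj, hjl, hjlam, hinf, hsup⟩ := IH w hwt (z ⊓ v) hw
    have hlabel : lam jl j = lam z t := hjlam.trans (lemD_dn hCN hz hv (Ne.symm hvz) hw hwv)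
    have hjw : j ≤ w := le_sup_left.trans hsup.le
    have hjz : ¬ j ≤ z := by
      intro h
      have h1 : j ≤ z ⊓ v := le_inf h (hjw.trans hwv)
      have h2 : j ⊔ (z ⊓ v) = z ⊓ v := sup_eq_right.mpr h1
      rw [hsup] at h2
      exact hw.lt.ne' h2
    refine ⟨j, jl, hj, hjl, hlabel, ?_, ?_⟩
    · have h1 : jl ≤ j ⊓ z := le_inf hjl.lt.le ((hinf ▸ inf_le_right : jl ≤ z ⊓ v).trans inf_le_left)
      have h2 : j ⊓ z < j := lt_of_le_of_ne inf_le_left (fun h => hjz (inf_eq_left.mp h))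
      exact covby_sandwich hjl h1 h2
    · have h1 : z < j ⊔ z := by
        rcases lt_or_eq_of_le (le_sup_right : z ≤ j ⊔ z) with h | h
        · exact h
        · exact absurd (sup_eq_right.mp h.symm) hjz
      exact covby_sandwich' hz (sup_le (hjw.trans hwt.le) hz.lt.le) h1

private lemma exists_infIrred_persp (hCN : IsCNLabeling lam) :
    ∀ t' u : L, t' ⋖ u →
      ∃ M Mu : L, InfIrred M ∧ M ⋖ Mu ∧ lam M Mu = lam t' u ∧ M ⊔ u = Mu ∧ M ⊓ u = t' := by
  intro t'
  refine WellFoundedGT.induction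
    (motive := fun t' => ∀ u : L, t' ⋖ u →
      ∃ M Mu : L, InfIrred M ∧ M ⋖ Mu ∧ lam M Mu = lam t' u ∧ M ⊔ u = Mu ∧ M ⊓ u = t') t' ?_
  intro t' IH u hu
  by_cases hirr : InfIrred t'
  · exact ⟨t', u, hirr, hu, rfl, sup_eq_right.mpr hu.lt.le, inf_eq_left.mpr hu.lt.le⟩
  · obtain ⟨s, hs, hsu⟩ := exists_second_covby' hirr hu
    obtain ⟨w, ⟨hw, hsw⟩, -⟩ := uniq_cover_up hCN hu hs (Ne.symm hsu)
    have hwt : t' < w := lt_of_lt_of_le hs.lt hsw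
    obtain ⟨M, Mu, hM, hMu, hMlam, hsupM, hinfM⟩ := IH w hwt (u ⊔ s) hw
    have hlabel : lam M Mu = lam t' u := hMlam.trans (lemD_up hCN hu hs (Ne.symm hsu) hw hsw)
    have hwM : w ≤ M := hinfM ▸ inf_le_left
    have hMu' : ¬ u ≤ M := by
      intro h
      have h1 : u ⊔ s ≤ M := sup_le h (hsw.trans hwM)
      have h2 : M ⊓ (u ⊔ s) = u ⊔ s := inf_eq_right.mpr h1
      rw [hinfM] at h2
      exact hw.lt.ne h2
    refine ⟨M, Mu, hM, hMu, hlabel, ?_, ?_⟩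
    · have h1 : M ⊔ u ≤ Mu :=
        sup_le hMu.lt.le ((le_sup_left : u ≤ u ⊔ s).trans (hsupM ▸ le_sup_right))
      have h2 : M < M ⊔ u := lt_of_le_of_ne le_sup_left (fun h => hMu' (sup_eq_left.mp h.symm))
      exact covby_sandwich' hMu h1 h2
    · have hta : t' ≤ M ⊓ u := le_inf (hwt.le.trans hwM) hu.lt.le
      have hb : M ⊓ u < u := lt_of_le_of_ne inf_le_right (fun h => hMu' (inf_eq_right.mp h))
      exact covby_sandwich hu hta hb

private lemma ping_up (hCN : IsCNLabeling lam) :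
    ∀ t z a al : L, z ⋖ t → al ⋖ a → a ⊓ z = al → a ⊔ z = t →
      lam al a ≠ lam z t → lam z t < lam al a := by
  intro t
  refine WellFoundedLT.induction
    (motive := fun t => ∀ z a al : L, z ⋖ t → al ⋖ a → a ⊓ z = al → a ⊔ z = t →
      lam al a ≠ lam z t → lam z t < lam al a) t ?_
  intro t IH z a al hz hal h1 h2 hne
  have hat : a ≤ t := h2 ▸ le_sup_left
  have haz : ¬ a ≤ z := fun h => hal.lt.ne (h1.symm.trans (inf_eq_left.mpr h))
  have hata : a ≠ t := by
    rintro rfl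
    have hzal : z = al := (inf_eq_right.mpr hz.lt.le).symm.trans h1
    exact hne (by rw [← hzal])
  obtain ⟨v, hav, hv⟩ := exists_le_covby (lt_of_le_of_ne hat hata)
  have hvz : v ≠ z := fun h => haz (h ▸ hav)
  have halz : al ≤ z := h1 ▸ inf_le_right
  have halm : al ≤ z ⊓ v := le_inf halz (hal.lt.le.trans hav)
  have ham : a ⊓ (z ⊓ v) = al := by
    have hle : a ⊓ (z ⊓ v) ≤ al := by rw [← h1]; exact inf_le_inf_left a inf_le_left
    exact le_antisymm hle (le_inf hal.lt.le halm)
  have hamlt : ¬ a ≤ z ⊓ v := fun h => haz (h.trans inf_le_left)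
  have hx2v : a ⊔ (z ⊓ v) ≤ v := sup_le hav inf_le_right
  have hmx2 : z ⊓ v < a ⊔ (z ⊓ v) :=
    lt_of_le_of_ne le_sup_right (fun h => hamlt (le_sup_left.trans h.symm.le))
  obtain ⟨w₂, ⟨hw₂, hw₂v⟩, huniq⟩ := uniq_cover_dn hCN hz hv (Ne.symm hvz)
  obtain ⟨w', hw', hw'x⟩ := exists_covby_le hmx2
  have hww : w' = w₂ := huniq w' hw' (hw'x.trans hx2v)
  have hw₂x : w₂ ≤ a ⊔ (z ⊓ v) := hww ▸ hw'x
  have hlabD : lam (z ⊓ v) w₂ = lam z t := lemD_dn hCN hz hv (Ne.symm hvz) hw₂ hw₂v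
  rcases eq_or_lt_of_le hw₂x with heqA | hltB
  · -- case A
    have hw₂t : w₂ < t := lt_of_le_of_lt hw₂v hv.lt
    have hneA : lam al a ≠ lam (z ⊓ v) w₂ := by rw [hlabD]; exact hne
    have := IH w₂ hw₂t (z ⊓ v) a al hw₂ hal ham heqA.symm hneA
    rwa [hlabD] at this
  · -- case B
    obtain ⟨y₆, hwy, hy₆⟩ := exists_le_covby hltB
    have hay₆ : ¬ a ≤ y₆ := by
      intro h
      exact hy₆.lt.not_ge (sup_le h (hw₂.lt.le.trans hwy))
    have hcov : a ⊓ y₆ = al := by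
      have hle : al ≤ a ⊓ y₆ := le_inf hal.lt.le (halm.trans (hw₂.lt.le.trans hwy))
      have hlt : a ⊓ y₆ < a := lt_of_le_of_ne inf_le_left (fun h => hay₆ (inf_eq_left.mp h))
      exact covby_sandwich hal hle hlt
    have hsup : a ⊔ y₆ = a ⊔ (z ⊓ v) := by
      have h1' : a ⊔ y₆ ≤ a ⊔ (z ⊓ v) := sup_le le_sup_left hy₆.lt.le
      have h2' : y₆ < a ⊔ y₆ :=
        lt_of_le_of_ne le_sup_right (fun h => hay₆ (sup_eq_right.mp h.symm))
      exact covby_sandwich' hy₆ h1' h2'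
    have hx₂t : a ⊔ (z ⊓ v) < t := lt_of_le_of_lt hx2v hv.lt
    have hconj3 : lam z t < lam y₆ (a ⊔ (z ⊓ v)) :=
      conj3_dn hCN hz hv (Ne.symm hvz) hw₂ hwy hy₆ hx2v
    by_cases heq : lam al a = lam y₆ (a ⊔ (z ⊓ v))
    · rw [heq]; exact hconj3
    · exact hconj3.trans (IH (a ⊔ (z ⊓ v)) hx₂t y₆ a al hy₆ hal hcov hsup heq)

private lemma ping_dn (hCN : IsCNLabeling lam) :
    ∀ t' u M Mu : L, t' ⋖ u → M ⋖ Mu → M ⊔ u = Mu → M ⊓ u = t' →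
      lam M Mu ≠ lam t' u → lam t' u < lam M Mu := by
  intro t'
  refine WellFoundedGT.induction
    (motive := fun t' => ∀ u M Mu : L, t' ⋖ u → M ⋖ Mu → M ⊔ u = Mu → M ⊓ u = t' →
      lam M Mu ≠ lam t' u → lam t' u < lam M Mu) t' ?_
  intro t' IH u M Mu hu hM h1 h2 hne
  have hMt : t' ≤ M := h2 ▸ inf_le_left
  have hMu' : ¬ u ≤ M := fun h => hM.lt.ne' (h1.symm.trans (sup_eq_left.mpr h))
  have hMt' : M ≠ t' := by
    rintro rfl
    have huMu : u = Mu := (sup_eq_right.mpr hu.lt.le).symm.trans h1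
    exact hne (by rw [← huMu])
  obtain ⟨s, hts, hsM⟩ := exists_covby_le (lt_of_le_of_ne hMt (Ne.symm hMt'))
  have hsu : s ≠ u := fun h => hMu' (h ▸ hsM)
  have huMule : u ≤ Mu := h1 ▸ le_sup_right
  have hnMu : u ⊔ s ≤ Mu := sup_le huMule (hsM.trans hM.lt.le)
  have hMn : M ⊔ (u ⊔ s) = Mu := by
    refine le_antisymm (sup_le hM.lt.le hnMu) ?_
    rw [← h1]
    exact sup_le_sup_left le_sup_left M
  have hy₂n : M ⊓ (u ⊔ s) < u ⊔ s :=
    lt_of_le_of_ne inf_le_right (fun h => hMu' (le_sup_left.trans (inf_eq_right.mp h)))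
  have hsy₂ : s ≤ M ⊓ (u ⊔ s) := le_inf hsM le_sup_right
  obtain ⟨w₂, ⟨hw₂, hsw₂⟩, huniq⟩ := uniq_cover_up hCN hu hts (Ne.symm hsu)
  obtain ⟨w', hy₂w', hw'⟩ := exists_le_covby hy₂n
  have hww : w' = w₂ := huniq w' hw' (hsy₂.trans hy₂w')
  have hy₂w₂ : M ⊓ (u ⊔ s) ≤ w₂ := hww ▸ hy₂w'
  have hlabD : lam w₂ (u ⊔ s) = lam t' u := lemD_up hCN hu hts (Ne.symm hsu) hw₂ hsw₂
  rcases eq_or_lt_of_le hy₂w₂ with heqA | hltB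
  · -- case A
    have ht'w₂ : t' < w₂ := lt_of_lt_of_le hts.lt hsw₂
    have hneA : lam M Mu ≠ lam w₂ (u ⊔ s) := by rw [hlabD]; exact hne
    have := IH w₂ ht'w₂ (u ⊔ s) M Mu hw₂ hM hMn heqA hneA
    rwa [hlabD] at this
  · -- case B
    obtain ⟨x₆, hx₆, hx₆w⟩ := exists_covby_le hltB
    have hx₆M : ¬ x₆ ≤ M := by
      intro h
      exact hx₆.lt.not_ge (le_inf h (hx₆w.trans hw₂.lt.le))
    have hcovM : M ⊓ x₆ = M ⊓ (u ⊔ s) := by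
      have hle : M ⊓ (u ⊔ s) ≤ M ⊓ x₆ := le_inf inf_le_left hx₆.lt.le
      have hlt : M ⊓ x₆ < x₆ := lt_of_le_of_ne inf_le_right (fun h => hx₆M (inf_eq_right.mp h))
      exact covby_sandwich hx₆ hle hlt
    have hsupM : M ⊔ x₆ = Mu := by
      have h1' : M ⊔ x₆ ≤ Mu := sup_le hM.lt.le (hx₆w.trans (hw₂.lt.le.trans hnMu))
      have h2' : M < M ⊔ x₆ := lt_of_le_of_ne le_sup_left (fun h => hx₆M (sup_eq_left.mp h.symm))
      exact covby_sandwich' hM h1' h2'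
    have ht'y₂ : t' < M ⊓ (u ⊔ s) := lt_of_lt_of_le hts.lt hsy₂
    have hconj3 : lam t' u < lam (M ⊓ (u ⊔ s)) x₆ :=
      conj3_up hCN hu hts (Ne.symm hsu) hw₂ hx₆w hx₆ hsy₂
    by_cases heq : lam M Mu = lam (M ⊓ (u ⊔ s)) x₆
    · rw [heq]; exact hconj3
    · exact hconj3.trans (IH (M ⊓ (u ⊔ s)) ht'y₂ x₆ M Mu hx₆ hM hsupM hcovM heq)

private lemma persp_label (hCN : IsCNLabeling lam) {z t a al : L} (hz : z ⋖ t) (hal : al ⋖ a)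
    (h1 : a ⊓ z = al) (h2 : a ⊔ z = t) : lam al a = lam z t := by
  by_contra hne
  have hping := ping_up hCN t z a al hz hal h1 h2 hne
  obtain ⟨M, Mu, hM, hMc, hMlam, hMsup, hMinf⟩ := exists_infIrred_persp hCN z t hz
  have hat : a ≤ t := h2 ▸ le_sup_left
  have hzM : z ≤ M := hMinf ▸ inf_le_left
  have haM : ¬ a ≤ M := by
    intro h
    have haz : a ≤ z := by
      have h' : a ≤ M ⊓ t := le_inf h hat
      rwa [hMinf] at h'
    exact hal.lt.ne (h1.symm.trans (inf_eq_left.mpr haz))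
  have hinfaM : a ⊓ M = al := by
    have hle : a ⊓ M ≤ al := by
      rw [← h1]
      refine le_inf inf_le_left ?_
      rw [← hMinf]
      exact le_inf inf_le_right (inf_le_left.trans hat)
    have hge : al ≤ a ⊓ M := le_inf hal.lt.le ((h1 ▸ inf_le_right : al ≤ z).trans hzM)
    exact le_antisymm hle hge
  have hsupaM : M ⊔ a = Mu := by
    have h1' : M ⊔ a ≤ Mu := sup_le hMc.lt.le (hat.trans (hMsup ▸ le_sup_right))
    have h2' : M < M ⊔ a := lt_of_le_of_ne le_sup_left (fun h => haM (sup_eq_left.mp h.symm))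
    exact covby_sandwich' hMc h1' h2'
  have hne' : lam M Mu ≠ lam al a := by rw [hMlam]; exact Ne.symm hne
  have hping2 : lam al a < lam M Mu :=
    ping_dn hCN al a M Mu hal hMc hsupaM (by rw [inf_comm M a]; exact hinfaM) hne'
  rw [hMlam] at hping2
  exact absurd hping2 (lt_asymm hping)

private lemma persp_label_dual (hCN : IsCNLabeling lam) {t' u M Mu : L} (ht : t' ⋖ u)
    (hMc : M ⋖ Mu) (h1 : M ⊔ u = Mu) (h2 : M ⊓ u = t') : lam M Mu = lam t' u := by
  by_contra hne
  have hping := ping_dn hCN t' u M Mu ht hMc h1 h2 hne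
  obtain ⟨j, jl, hj, hjc, hjlam, hjinf, hjsup⟩ := exists_supIrred_persp hCN u t' ht
  have hju : j ≤ u := hjsup ▸ le_sup_left
  have ht'M : t' ≤ M := h2 ▸ inf_le_left
  have hjM : ¬ j ≤ M := by
    intro h
    have hjt : j ≤ t' := by rw [← h2]; exact le_inf h hju
    exact hjc.lt.ne (hjinf.symm.trans (inf_eq_left.mpr hjt))
  have hinfjM : j ⊓ M = jl := by
    have hle : j ⊓ M ≤ jl := by
      rw [← hjinf]
      refine le_inf inf_le_left ?_
      rw [← h2]
      exact le_inf inf_le_right (inf_le_left.trans hju)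
    have hge : jl ≤ j ⊓ M := le_inf hjc.lt.le ((hjinf ▸ inf_le_right : jl ≤ t').trans ht'M)
    exact le_antisymm hle hge
  have hsupjM : j ⊔ M = Mu := by
    have ha : j ⊔ M ≤ Mu := sup_le (hju.trans (h1 ▸ le_sup_right)) hMc.lt.le
    have hb : M < j ⊔ M := lt_of_le_of_ne le_sup_right (fun h => hjM (sup_eq_right.mp h.symm))
    exact covby_sandwich' hMc ha hb
  have hne' : lam jl j ≠ lam M Mu := by rw [hjlam]; exact Ne.symm hne
  have hping2 : lam M Mu < lam jl j :=
    ping_up hCN Mu M j jl hMc hjc hinfjM hsupjM hne'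
  rw [hjlam] at hping2
  exact absurd hping2 (lt_asymm hping)

end CUProofPing
section CUProofMain

variable {L : Type u} [Lattice L] [Fintype L] {P : Type v} [PartialOrder P] {lam : L → L → P}

private lemma canonicalJoinRep (hlam : IsCULabeling lam) (x : L) :
    IsCanonicalJoinRep {j : L | SupIrred j ∧ ∃ a, a ⋖ j ∧ lam a j ∈ lamDown lam x} x := by
  obtain ⟨hCN, hCU1, -⟩ := hlam
  have hchar : ∀ j ∈ {j : L | SupIrred j ∧ ∃ a, a ⋖ j ∧ lam a j ∈ lamDown lam x},
      ∃ jl y, y ⋖ x ∧ jl ⋖ j ∧ lam jl j = lam y x ∧ j ⊓ y = jl ∧ j ⊔ y = x := by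
    intro j hj
    obtain ⟨hjirr, a', ha', y, hy, hylam⟩ := hj
    obtain ⟨j₂, j₂l, hj₂, hj₂c, hj₂lam, hj₂inf, hj₂sup⟩ := exists_supIrred_persp hCN x y hy
    have hjj : j = j₂ := by
      by_contra hne
      exact hCU1 j j₂ a' j₂l hjirr hj₂ ha' hj₂c hne (hylam.symm.trans hj₂lam.symm)
    rw [hjj]
    exact ⟨j₂l, y, hy, hj₂c, hj₂lam, hj₂inf, hj₂sup⟩
  have hmem : ∀ y, y ⋖ x →
      ∃ j jl, j ∈ {j : L | SupIrred j ∧ ∃ a, a ⋖ j ∧ lam a j ∈ lamDown lam x} ∧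
        jl ⋖ j ∧ lam jl j = lam y x ∧ j ⊓ y = jl ∧ j ⊔ y = x := by
    intro y hy
    obtain ⟨j, jl, hj, hjc, hjlam, hjinf, hjsup⟩ := exists_supIrred_persp hCN x y hy
    exact ⟨j, jl, ⟨hj, jl, hjc, ⟨y, hy, hjlam.symm⟩⟩, hjc, hjlam, hjinf, hjsup⟩
  refine ⟨fun a ha => ha.1, ⟨?_, ?_⟩, ?_, ?_⟩
  · -- upper bound
    intro j hj
    obtain ⟨jl, y, hy, hjc, hlm, hinf, hsup⟩ := hchar j hj
    exact le_sup_left.trans_eq hsup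
  · -- least upper bound
    intro u hu
    by_contra hxu
    have hs : x ⊓ u < x := lt_of_le_of_ne inf_le_left (fun h => hxu (inf_eq_left.mp h))
    obtain ⟨y, hsy, hy⟩ := exists_le_covby hs
    obtain ⟨j, jl, hjA, hjc, hjlam, hjinf, hjsup⟩ := hmem y hy
    have hju : j ≤ u := hu hjA
    have hjx : j ≤ x := le_sup_left.trans_eq hjsup
    have hjy : j ≤ y := (le_inf hjx hju).trans hsy
    have heq : j ⊓ y = j := inf_eq_left.mpr hjy
    rw [hjinf] at heq
    exact hjc.lt.ne heq
  · -- irredundance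
    intro B hB hLUB
    obtain ⟨j₀, hj₀A, hj₀B⟩ := Set.exists_of_ssubset hB
    obtain ⟨j₀l, y₀, hy₀, hj₀c, hj₀lam, hj₀inf, hj₀sup⟩ := hchar j₀ hj₀A
    have hble : ∀ b ∈ B, b ≤ y₀ := by
      intro b hb
      have hbA := hB.subset hb
      obtain ⟨bl, y', hy', hbc, hblam, hbinf, hbsup⟩ := hchar b hbA
      have hyy : y' ≠ y₀ := by
        rintro rfl
        have hbj : b = j₀ := by
          by_contra hne
          exact hCU1 b j₀ bl j₀l hbA.1 hj₀A.1 hbc hj₀c hne (hblam.trans hj₀lam.symm)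
        exact hj₀B (hbj ▸ hb)
      obtain ⟨w, ⟨hwcov, hwle⟩, -⟩ := uniq_cover_dn hCN hy' hy₀ hyy
      have hlab : lam (y' ⊓ y₀) w = lam y' x := lemD_dn hCN hy' hy₀ hyy hwcov hwle
      obtain ⟨j₃, j₃l, hj₃, hj₃c, hj₃lam, hj₃inf, hj₃sup⟩ :=
        exists_supIrred_persp hCN w (y' ⊓ y₀) hwcov
      have hj₃b : j₃ = b := by
        by_contra hne
        exact hCU1 j₃ b j₃l bl hj₃ hbA.1 hj₃c hbc hne (hj₃lam.trans (hlab.trans hblam.symm))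
      have hjw : j₃ ≤ w := le_sup_left.trans_eq hj₃sup
      rw [hj₃b] at hjw
      exact hjw.trans hwle
    exact hy₀.lt.not_ge (hLUB.2 hble)
  · -- minimality among irredundant representations
    intro B hBirr hBLUB hBmin j hjA
    obtain ⟨jl, y, hy, hjc, hjlam, hjinf, hjsup⟩ := hchar j hjA
    have hbex : ∃ b ∈ B, ¬ b ≤ y := by
      by_contra h
      push_neg at h
      exact hy.lt.not_ge (hBLUB.2 h)
    obtain ⟨b, hbB, hby⟩ := hbex
    have hbx : b ≤ x := hBLUB.1 hbB
    have hSne : b ∈ {c : L | c ≤ b ∧ c ⊔ y = x} := by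
      refine ⟨le_rfl, ?_⟩
      have h1' : b ⊔ y ≤ x := sup_le hbx hy.lt.le
      have h2' : y < b ⊔ y := lt_of_le_of_ne le_sup_right (fun h => hby (sup_eq_right.mp h.symm))
      exact covby_sandwich' hy h1' h2'
    obtain ⟨a₀, ⟨ha₀b, ha₀s⟩, hmin⟩ :=
      Set.Finite.exists_minimal_wrt id {c : L | c ≤ b ∧ c ⊔ y = x} (Set.toFinite _) ⟨b, hSne⟩
    have ha₀y : ¬ a₀ ≤ y := fun h => hy.lt.ne ((sup_eq_right.mpr h).symm.trans ha₀s)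
    have hirr : SupIrred a₀ := by
      constructor
      · intro hm
        exact ha₀y ((hm (inf_le_left : a₀ ⊓ y ≤ a₀)).trans inf_le_right)
      · intro c d hcd
        by_contra hne
        push_neg at hne
        obtain ⟨hc, hd⟩ := hne
        have hca : c ≤ a₀ := hcd ▸ le_sup_left
        have hda : d ≤ a₀ := hcd ▸ le_sup_right
        have hcy : c ≤ y := by
          by_contra hcy
          have hcx : c ⊔ y = x := by
            have h1' : c ⊔ y ≤ x := sup_le ((hca.trans ha₀b).trans hbx) hy.lt.le
            have h2' : y < c ⊔ y :=
              lt_of_le_of_ne le_sup_right (fun h => hcy (sup_eq_right.mp h.symm))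
            exact covby_sandwich' hy h1' h2'
          exact hc (hmin c ⟨hca.trans ha₀b, hcx⟩ hca).symm
        have hdy : d ≤ y := by
          by_contra hdy
          have hdx : d ⊔ y = x := by
            have h1' : d ⊔ y ≤ x := sup_le ((hda.trans ha₀b).trans hbx) hy.lt.le
            have h2' : y < d ⊔ y :=
              lt_of_le_of_ne le_sup_right (fun h => hdy (sup_eq_right.mp h.symm))
            exact covby_sandwich' hy h1' h2'
          exact hd (hmin d ⟨hda.trans ha₀b, hdx⟩ hda).symm
        exact ha₀y (hcd ▸ sup_le hcy hdy)
    obtain ⟨c₀, hc₀⟩ := not_isMin_iff.mp hirr.1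
    obtain ⟨al, hcal, hal⟩ := exists_le_covby hc₀
    have haly : al ≤ y := by
      by_contra haly
      have halx : al ⊔ y = x := by
        have h1' : al ⊔ y ≤ x := sup_le ((hal.lt.le.trans ha₀b).trans hbx) hy.lt.le
        have h2' : y < al ⊔ y :=
          lt_of_le_of_ne le_sup_right (fun h => haly (sup_eq_right.mp h.symm))
        exact covby_sandwich' hy h1' h2'
      exact hal.lt.ne' (hmin al ⟨hal.lt.le.trans ha₀b, halx⟩ hal.lt.le)
    have hinf : a₀ ⊓ y = al := by
      have hle : al ≤ a₀ ⊓ y := le_inf hal.lt.le haly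
      have hlt : a₀ ⊓ y < a₀ := lt_of_le_of_ne inf_le_left (fun h => ha₀y (inf_eq_left.mp h))
      exact covby_sandwich hal hle hlt
    have hlab : lam al a₀ = lam y x := persp_label hCN hy hal hinf ha₀s
    have hja : j = a₀ := by
      by_contra hne
      exact hCU1 j a₀ jl al hjA.1 hirr hjc hal hne (hjlam.trans hlab.symm)
    exact ⟨b, hbB, by rw [hja]; exact ha₀b⟩

private lemma canonicalMeetRep (hlam : IsCULabeling lam) (x : L) :
    IsCanonicalMeetRep {m : L | InfIrred m ∧ ∃ b, m ⋖ b ∧ lam m b ∈ lamUp lam x} x := by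
  obtain ⟨hCN, -, hCU2⟩ := hlam
  have hchar : ∀ m ∈ {m : L | InfIrred m ∧ ∃ b, m ⋖ b ∧ lam m b ∈ lamUp lam x},
      ∃ mu y, x ⋖ y ∧ m ⋖ mu ∧ lam m mu = lam x y ∧ m ⊔ y = mu ∧ m ⊓ y = x := by
    intro m hm
    obtain ⟨hmirr, b', hb', y, hy, hylam⟩ := hm
    obtain ⟨M, Mu, hM, hMc, hMlam, hMsup, hMinf⟩ := exists_infIrred_persp hCN x y hy
    have hmM : m = M := by
      by_contra hne
      exact hCU2 m M b' Mu hmirr hM hb' hMc hne (hylam.symm.trans hMlam.symm)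
    rw [hmM]
    exact ⟨Mu, y, hy, hMc, hMlam, hMsup, hMinf⟩
  have hmem : ∀ y, x ⋖ y →
      ∃ M Mu, M ∈ {m : L | InfIrred m ∧ ∃ b, m ⋖ b ∧ lam m b ∈ lamUp lam x} ∧
        M ⋖ Mu ∧ lam M Mu = lam x y ∧ M ⊔ y = Mu ∧ M ⊓ y = x := by
    intro y hy
    obtain ⟨M, Mu, hM, hMc, hMlam, hMsup, hMinf⟩ := exists_infIrred_persp hCN x y hy
    exact ⟨M, Mu, ⟨hM, Mu, hMc, ⟨y, hy, hMlam.symm⟩⟩, hMc, hMlam, hMsup, hMinf⟩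
  refine ⟨fun a ha => ha.1, ⟨?_, ?_⟩, ?_, ?_⟩
  · -- lower bound
    intro m hm
    obtain ⟨mu, y, hy, hmc, hlm, hsup, hinf⟩ := hchar m hm
    exact hinf ▸ inf_le_left
  · -- greatest lower bound
    intro u hu
    by_contra hux
    have hs : x < x ⊔ u := lt_of_le_of_ne le_sup_left (fun h => hux (sup_eq_left.mp h.symm))
    obtain ⟨y, hy, hys⟩ := exists_covby_le hs
    obtain ⟨M, Mu, hMA, hMc, hMlam, hMsup, hMinf⟩ := hmem y hy
    have huM : u ≤ M := hu hMA
    have hxM : x ≤ M := hMinf ▸ inf_le_left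
    have hyM : y ≤ M := hys.trans (sup_le hxM huM)
    have heq : M ⊓ y = y := inf_eq_right.mpr hyM
    rw [hMinf] at heq
    exact hy.lt.ne heq
  · -- irredundance
    intro B hB hGLB
    obtain ⟨M₀, hM₀A, hM₀B⟩ := Set.exists_of_ssubset hB
    obtain ⟨M₀u, y₀, hy₀, hM₀c, hM₀lam, hM₀sup, hM₀inf⟩ := hchar M₀ hM₀A
    have hble : ∀ b ∈ B, y₀ ≤ b := by
      intro b hb
      have hbA := hB.subset hb
      obtain ⟨bu, y', hy', hbc, hblam, hbsup, hbinf⟩ := hchar b hbA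
      have hyy : y' ≠ y₀ := by
        rintro rfl
        have hbM : b = M₀ := by
          by_contra hne
          exact hCU2 b M₀ bu M₀u hbA.1 hM₀A.1 hbc hM₀c hne (hblam.trans hM₀lam.symm)
        exact hM₀B (hbM ▸ hb)
      obtain ⟨w, ⟨hwcov, hwle⟩, -⟩ := uniq_cover_up hCN hy' hy₀ hyy
      have hlab : lam w (y' ⊔ y₀) = lam x y' := lemD_up hCN hy' hy₀ hyy hwcov hwle
      obtain ⟨M₃, M₃u, hM₃, hM₃c, hM₃lam, hM₃sup, hM₃inf⟩ :=
        exists_infIrred_persp hCN w (y' ⊔ y₀) hwcov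
      have hMb : M₃ = b := by
        by_contra hne
        exact hCU2 M₃ b M₃u bu hM₃ hbA.1 hM₃c hbc hne (hM₃lam.trans (hlab.trans hblam.symm))
      have hwM : w ≤ M₃ := hM₃inf ▸ inf_le_left
      rw [hMb] at hwM
      exact hwle.trans hwM
    exact hy₀.lt.not_ge (hGLB.2 hble)
  · -- minimality among irredundant representations
    intro B hBirr hBGLB hBmin m hmA
    obtain ⟨mu, y, hy, hmc, hmlam, hmsup, hminf⟩ := hchar m hmA
    have hbex : ∃ b ∈ B, ¬ y ≤ b := by
      by_contra h
      push_neg at h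
      exact hy.lt.not_ge (hBGLB.2 h)
    obtain ⟨b, hbB, hby⟩ := hbex
    have hxb : x ≤ b := hBGLB.1 hbB
    have hSne : b ∈ {c : L | b ≤ c ∧ c ⊓ y = x} := by
      refine ⟨le_rfl, ?_⟩
      have h1' : x ≤ b ⊓ y := le_inf hxb hy.lt.le
      have h2' : b ⊓ y < y := lt_of_le_of_ne inf_le_right (fun h => hby (inf_eq_right.mp h))
      exact covby_sandwich hy h1' h2'
    obtain ⟨a₀, ⟨ha₀b, ha₀s⟩, hmax⟩ :=
      Set.Finite.exists_maximal_wrt id {c : L | b ≤ c ∧ c ⊓ y = x} (Set.toFinite _) ⟨b, hSne⟩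
    have ha₀y : ¬ y ≤ a₀ := fun h => hy.lt.ne' ((inf_eq_right.mpr h).symm.trans ha₀s)
    have hirr : InfIrred a₀ := by
      constructor
      · intro hm'
        exact ha₀y (le_sup_right.trans (hm' (le_sup_left : a₀ ≤ a₀ ⊔ y)))
      · intro c d hcd
        by_contra hne
        push_neg at hne
        obtain ⟨hc, hd⟩ := hne
        have hac : a₀ ≤ c := hcd ▸ inf_le_left
        have had : a₀ ≤ d := hcd ▸ inf_le_right
        have hcy : y ≤ c := by
          by_contra hcy
          have hcx : c ⊓ y = x := by
            have h1' : x ≤ c ⊓ y := le_inf (hxb.trans (ha₀b.trans hac)) hy.lt.le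
            have h2' : c ⊓ y < y :=
              lt_of_le_of_ne inf_le_right (fun h => hcy (inf_eq_right.mp h))
            exact covby_sandwich hy h1' h2'
          exact hc (hmax c ⟨ha₀b.trans hac, hcx⟩ hac).symm
        have hdy : y ≤ d := by
          by_contra hdy
          have hdx : d ⊓ y = x := by
            have h1' : x ≤ d ⊓ y := le_inf (hxb.trans (ha₀b.trans had)) hy.lt.le
            have h2' : d ⊓ y < y :=
              lt_of_le_of_ne inf_le_right (fun h => hdy (inf_eq_right.mp h))
            exact covby_sandwich hy h1' h2'
          exact hd (hmax d ⟨ha₀b.trans had, hdx⟩ had).symm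
        exact ha₀y (hcd ▸ le_inf hcy hdy)
    obtain ⟨c₀, hc₀⟩ := not_isMax_iff.mp hirr.1
    obtain ⟨au, hau, hcau⟩ := exists_covby_le hc₀
    have hyau : y ≤ au := by
      by_contra hyau
      have haux : au ⊓ y = x := by
        have h1' : x ≤ au ⊓ y := le_inf (hxb.trans (ha₀b.trans hau.lt.le)) hy.lt.le
        have h2' : au ⊓ y < y :=
          lt_of_le_of_ne inf_le_right (fun h => hyau (inf_eq_right.mp h))
        exact covby_sandwich hy h1' h2'
      exact hau.lt.ne (hmax au ⟨ha₀b.trans hau.lt.le, haux⟩ hau.lt.le)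
    have hsup : a₀ ⊔ y = au := by
      have hle : a₀ ⊔ y ≤ au := sup_le hau.lt.le hyau
      have hlt : a₀ < a₀ ⊔ y := lt_of_le_of_ne le_sup_left (fun h => ha₀y (sup_eq_left.mp h.symm))
      exact covby_sandwich' hau hle hlt
    have hlab : lam a₀ au = lam x y := persp_label_dual hCN hy hau hsup ha₀s
    have hma : m = a₀ := by
      by_contra hne
      exact hCU2 m a₀ mu au hmA.1 hirr hmc hau hne (hmlam.trans hlab.symm)
    exact ⟨b, hbB, by rw [hma]; exact ha₀b⟩

end CUProofMain
/-- In a finite lattice with a CU-labeling, the set of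
join-irreducibles `j` with `λ(j₊, j) ∈ λ↓(x)` is the canonical join-representation
of `x`, and dually for the canonical meet-representation. -/
theorem cu_labeling_canonical_representations
    {L : Type u} [Lattice L] [Fintype L] {P : Type v} [PartialOrder P]
    (lam : L → L → P) (hlam : IsCULabeling lam) (x : L) :
    IsCanonicalJoinRep {j : L | SupIrred j ∧ ∃ a, a ⋖ j ∧ lam a j ∈ lamDown lam x} x ∧
      IsCanonicalMeetRep {m : L | InfIrred m ∧ ∃ b, m ⋖ b ∧ lam m b ∈ lamUp lam x} x := by
  exact ⟨canonicalJoinRep hlam x, canonicalMeetRep hlam x⟩
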